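/- Let T > 0, let a > 0 and 0 < η < 1, let ω : [0,T] → [0,∞) be continuous and non-decreasing, and let v : [0,T] → [0,∞) be a bounded measurable function satisfying v(t) ≤ ω(t) + a ∫₀ᵗ (t−s)^{η−1} v(s) ds for all t ∈ [0,T]. Then for all t ∈ [0,T], v(t) ≤ 2ω(t) · exp(4^{2/η} a^{2/η} t² / η^{2/η}). -/

import Mathlib

open MeasureTheory Set

lemma hint_pow (C t : ℝ) (k : ℕ) :
    ∫ s in (0:ℝ)..t, (C*s)^k / (Nat.factorial k) = (C^k*t^(k+1)/(k+1))/(Nat.factorial k) := by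
  rw [intervalIntegral.integral_div]
  congr 1
  simp_rw [mul_pow]
  rw [intervalIntegral.integral_const_mul, integral_pow]
  simp [mul_div_assoc]

lemma term_eq (C t : ℝ) (k : ℕ) :
    C * ((C^k*t^(k+1)/(k+1))/(Nat.factorial k)) = (C*t)^(k+1) / (Nat.factorial (k+1)) := by
  rw [Nat.factorial_succ, mul_pow]
  have h1 : ((k:ℝ)+1) ≠ 0 := by positivity
  have h2 : ((Nat.factorial k : ℝ)) ≠ 0 := by positivity
  push_cast
  field_simp
  ring

lemma gronwall_series (T C M : ℝ) (hC : 0 ≤ C) (hM : 0 ≤ M)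
    (A S : ℝ → ℝ)
    (hA_mono : MonotoneOn A (Icc 0 T))
    (hA_nonneg : ∀ t ∈ Icc (0:ℝ) T, 0 ≤ A t)
    (hS_int : IntegrableOn S (Icc 0 T))
    (hS_nonneg : ∀ t ∈ Icc (0:ℝ) T, 0 ≤ S t)
    (hS_bdd : ∀ t ∈ Icc (0:ℝ) T, S t ≤ M)
    (h : ∀ t ∈ Icc (0:ℝ) T, S t ≤ A t + C * ∫ s in (0:ℝ)..t, S s) :
    ∀ t ∈ Icc (0:ℝ) T, S t ≤ A t * Real.exp (C * t) := by
  have key : ∀ n : ℕ, ∀ t ∈ Icc (0:ℝ) T,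
      S t ≤ A t * (∑ k ∈ Finset.range n, (C*t)^k / (Nat.factorial k)) +
        M * ((C*t)^n / (Nat.factorial n)) := by
    intro n
    induction n with
    | zero =>
      intro t ht
      simpa using hS_bdd t ht
    | succ n ih =>
      intro t ht
      have ht0 : (0:ℝ) ≤ t := ht.1
      have hAt : 0 ≤ A t := hA_nonneg t ht
      set g : ℝ → ℝ := fun s => A t * (∑ k ∈ Finset.range n, (C*s)^k / (Nat.factorial k)) +
        M * ((C*s)^n / (Nat.factorial n)) with hg
      have hgcont : Continuous g := by
        apply Continuous.add
        · apply continuous_const.mul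
          apply continuous_finset_sum
          intro k _
          fun_prop
        · fun_prop
      have hSint' : IntervalIntegrable S volume 0 t := by
        rw [intervalIntegrable_iff_integrableOn_Ioc_of_le ht0]
        exact (hS_int.mono_set (fun x hx => ⟨le_of_lt hx.1, le_trans hx.2 ht.2⟩))
      have hmono : ∫ s in (0:ℝ)..t, S s ≤ ∫ s in (0:ℝ)..t, g s := by
        apply intervalIntegral.integral_mono_on ht0 hSint' (hgcont.intervalIntegrable 0 t)
        intro s hs
        have hsT : s ∈ Icc (0:ℝ) T := ⟨hs.1, le_trans hs.2 ht.2⟩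
        refine le_trans (ih s hsT) ?_
        have hAs : A s ≤ A t := hA_mono hsT ht hs.2
        have hsum : 0 ≤ ∑ k ∈ Finset.range n, (C*s)^k / (Nat.factorial k) := by
          apply Finset.sum_nonneg
          intro k _
          exact div_nonneg (pow_nonneg (mul_nonneg hC hs.1) k) (by positivity)
        have : A s * (∑ k ∈ Finset.range n, (C*s)^k / (Nat.factorial k)) ≤
            A t * (∑ k ∈ Finset.range n, (C*s)^k / (Nat.factorial k)) :=
          mul_le_mul_of_nonneg_right hAs hsum
        simp only [hg]
        linarith
      have hgval : C * ∫ s in (0:ℝ)..t, g s =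
          A t * (∑ k ∈ Finset.range n, (C*t)^(k+1) / (Nat.factorial (k+1))) +
          M * ((C*t)^(n+1) / (Nat.factorial (n+1))) := by
        simp only [hg]
        rw [intervalIntegral.integral_add, intervalIntegral.integral_const_mul,
          intervalIntegral.integral_const_mul,
          intervalIntegral.integral_finset_sum]
        · simp_rw [hint_pow]
          rw [mul_add, ← mul_assoc, mul_comm C (A t), mul_assoc, Finset.mul_sum]
          simp_rw [term_eq]
          congr 1
          rw [← mul_assoc, mul_comm C M, mul_assoc, term_eq]
        · intro k _; exact (by fun_prop : Continuous fun s => (C*s)^k / (Nat.factorial k)).intervalIntegrable 0 t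
        · exact (continuous_const.mul (by apply continuous_finset_sum; intro k _; fun_prop :
            Continuous fun s => ∑ k ∈ Finset.range n, (C*s)^k / (Nat.factorial k))).intervalIntegrable 0 t
        · exact (continuous_const.mul (by fun_prop : Continuous fun s => (C*s)^n / (Nat.factorial n))).intervalIntegrable 0 t
      calc S t ≤ A t + C * ∫ s in (0:ℝ)..t, S s := h t ht
        _ ≤ A t + C * ∫ s in (0:ℝ)..t, g s := by nlinarith
        _ = A t * (∑ k ∈ Finset.range (n+1), (C*t)^k / (Nat.factorial k)) +
            M * ((C*t)^(n+1) / (Nat.factorial (n+1))) := by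
          rw [hgval, Finset.sum_range_succ']
          simp [mul_add]
          ring
  intro t ht
  have hAt : 0 ≤ A t := hA_nonneg t ht
  have hCt : 0 ≤ C * t := mul_nonneg hC ht.1
  have hlim : Filter.Tendsto (fun n : ℕ => A t * Real.exp (C*t) + M * ((C*t)^n / (Nat.factorial n)))
      Filter.atTop (nhds (A t * Real.exp (C*t))) := by
    have := FloorSemiring.tendsto_pow_div_factorial_atTop (K := ℝ) (C*t)
    have h2 := this.const_mul M
    simpa using (tendsto_const_nhds.add h2)
  refine ge_of_tendsto hlim ?_
  filter_upwards with n
  calc S t ≤ A t * (∑ k ∈ Finset.range n, (C*t)^k / (Nat.factorial k)) +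
        M * ((C*t)^n / (Nat.factorial n)) := key n t ht
    _ ≤ A t * Real.exp (C*t) + M * ((C*t)^n / (Nat.factorial n)) := by
        have := Real.sum_le_exp_of_nonneg hCt n
        nlinarith

theorem singular_gronwall_monotone (T a η : ℝ) (hT : 0 < T) (ha : 0 < a)
    (hη₁ : 0 < η) (hη₂ : η < 1)
    (ω v : ℝ → ℝ)
    (hω_cont : ContinuousOn ω (Set.Icc 0 T))
    (hω_mono : MonotoneOn ω (Set.Icc 0 T))
    (hω_nonneg : ∀ t ∈ Set.Icc (0 : ℝ) T, 0 ≤ ω t)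
    (hv_meas : Measurable v)
    (hv_bdd : ∃ M : ℝ, ∀ t ∈ Set.Icc (0 : ℝ) T, v t ≤ M)
    (hv_nonneg : ∀ t ∈ Set.Icc (0 : ℝ) T, 0 ≤ v t)
    (hineq : ∀ t ∈ Set.Icc (0 : ℝ) T,
      v t ≤ ω t + a * ∫ s in (0 : ℝ)..t, (t - s) ^ (η - 1) * v s) :
    ∀ t ∈ Set.Icc (0 : ℝ) T,
      v t ≤ 2 * ω t
        * Real.exp ((4 : ℝ) ^ (2 / η) * a ^ (2 / η) * t ^ 2 / η ^ (2 / η)) := by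
  obtain ⟨M₀, hM₀⟩ := hv_bdd
  set M := max M₀ 0 with hM
  have hM0 : 0 ≤ M := le_max_right _ _
  have hvM : ∀ s ∈ Set.Icc (0:ℝ) T, v s ≤ M := fun s hs => (hM₀ s hs).trans (le_max_left _ _)
  have hη1' : (-1:ℝ) < η - 1 := by linarith
  have hηne : η ≠ 0 := ne_of_gt hη₁
  set x₀ := η / (2*a) with hx₀
  have hx₀pos : 0 < x₀ := by positivity
  set ε := x₀ ^ (1/η) with hε
  have hεpos : 0 < ε := Real.rpow_pos_of_pos hx₀pos _
  have hεη : ε ^ η = η / (2*a) := by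
    rw [hε, ← Real.rpow_mul hx₀pos.le, one_div_mul_cancel hηne, Real.rpow_one]
  set C := 2*a*ε^(η-1) with hC
  have hεpow : (0:ℝ) < ε^(η-1) := Real.rpow_pos_of_pos hεpos _
  have hCpos : 0 < C := by positivity
  have hCε : C * ε = η := by
    have h1 : ε^(η-1) * ε = ε^η := by
      rw [← Real.rpow_add_one hεpos.ne' (η-1)]
      norm_num
    calc C * ε = 2*a*(ε^(η-1)*ε) := by rw [hC]; ring
      _ = 2*a*(η/(2*a)) := by rw [h1, hεη]
      _ = η := by field_simp
  -- running supremum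
  set S : ℝ → ℝ := fun t => sSup (v '' Set.Icc 0 (min t T)) with hSdef
  have hbdd : ∀ t : ℝ, BddAbove (v '' Set.Icc 0 (min t T)) := by
    intro t
    refine ⟨M, ?_⟩
    rintro y ⟨z, hz, rfl⟩
    exact hvM z ⟨hz.1, le_trans hz.2 (min_le_right _ _)⟩
  have hvleS : ∀ s : ℝ, 0 ≤ s → s ≤ T → ∀ t : ℝ, s ≤ t → v s ≤ S t := by
    intro s hs0 hsT t hst
    exact le_csSup (hbdd t) ⟨s, ⟨hs0, le_min hst hsT⟩, rfl⟩
  have hS_le_M : ∀ t : ℝ, S t ≤ M := by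
    intro t
    apply Real.sSup_le _ hM0
    rintro y ⟨z, hz, rfl⟩
    exact hvM z ⟨hz.1, le_trans hz.2 (min_le_right _ _)⟩
  have hS_nonneg : ∀ t : ℝ, 0 ≤ t → 0 ≤ S t :=
    fun t ht => le_trans (hv_nonneg 0 ⟨le_refl _, hT.le⟩)
      (hvleS 0 (le_refl _) hT.le t ht)
  have hS_mono : Monotone S := by
    intro t1 t2 h12
    rcases le_or_gt 0 t1 with h1 | h1
    · apply Real.sSup_le _ (hS_nonneg t2 (le_trans h1 h12))
      rintro y ⟨z, hz, rfl⟩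
      exact le_csSup (hbdd t2) ⟨z, ⟨hz.1,
        le_min (le_trans hz.2 (min_le_of_left_le h12)) (le_trans hz.2 (min_le_right _ _))⟩, rfl⟩
    · have he : Set.Icc (0:ℝ) (min t1 T) = ∅ :=
        Set.Icc_eq_empty (by simp only [not_le]; exact lt_of_le_of_lt (min_le_left _ _) h1)
      rcases le_or_gt 0 t2 with h2 | h2
      · simp only [hSdef, he, Set.image_empty, Real.sSup_empty]
        exact hS_nonneg t2 h2
      · have he2 : Set.Icc (0:ℝ) (min t2 T) = ∅ :=
          Set.Icc_eq_empty (by simp only [not_le]; exact lt_of_le_of_lt (min_le_left _ _) h2)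
        simp [hSdef, he, he2]
  have hS_int : IntegrableOn S (Set.Icc 0 T) := by
    apply Integrable.mono' ((integrableOn_const_iff (C := M)).mpr (Or.inr measure_Icc_lt_top))
      (hS_mono.measurable.aestronglyMeasurable)
    filter_upwards [ae_restrict_mem measurableSet_Icc] with s hs
    rw [Real.norm_eq_abs, abs_of_nonneg (hS_nonneg s hs.1)]
    exact hS_le_M s
  have hSii : ∀ c d : ℝ, 0 ≤ c → c ≤ d → d ≤ T → IntervalIntegrable S volume c d := by
    intro c d hc0 hcd hdT
    rw [intervalIntegrable_iff_integrableOn_Ioc_of_le hcd]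
    exact hS_int.mono_set (fun x hx => ⟨le_trans hc0 hx.1.le, le_trans hx.2 hdT⟩)
  -- kernel integrability
  have hker : ∀ τ c d : ℝ, IntervalIntegrable (fun s => (τ - s)^(η-1)) volume c d := by
    intro τ c d
    have h1 := (intervalIntegral.intervalIntegrable_rpow' (a := τ - c) (b := τ - d) hη1').comp_sub_left τ
    simpa using h1
  have hfii : ∀ τ : ℝ, τ ≤ T → ∀ c d : ℝ, 0 ≤ c → c ≤ d → d ≤ τ →
      IntervalIntegrable (fun s => (τ - s)^(η-1) * v s) volume c d := by
    intro τ hτT c d hc0 hcd hdτ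
    rw [intervalIntegrable_iff_integrableOn_Ioc_of_le hcd]
    have hg0 : IntegrableOn (fun s => (τ - s)^(η-1)) (Set.Ioc c d) volume := by
      have := hker τ c d
      rwa [intervalIntegrable_iff_integrableOn_Ioc_of_le hcd] at this
    apply Integrable.mono' (hg0.const_mul M)
      ((hg0.aestronglyMeasurable).mul hv_meas.aestronglyMeasurable)
    filter_upwards [ae_restrict_mem measurableSet_Ioc] with s hs
    simp only [Pi.mul_apply]
    have hsT : s ∈ Set.Icc (0:ℝ) T := ⟨le_trans hc0 hs.1.le, le_trans hs.2 (le_trans hdτ hτT)⟩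
    have hker0 : 0 ≤ (τ - s)^(η-1) := Real.rpow_nonneg (by linarith [hs.2, hdτ] : (0:ℝ) ≤ τ - s) _
    rw [Real.norm_eq_abs, abs_of_nonneg (mul_nonneg hker0 (hv_nonneg s hsT))]
    calc (τ - s)^(η-1) * v s ≤ (τ - s)^(η-1) * M :=
          mul_le_mul_of_nonneg_left (hvM s hsT) hker0
      _ = M * (τ - s)^(η-1) := mul_comm _ _
  -- kernel integral value
  have hkerval : ∀ c τ : ℝ, c ≤ τ → ∫ s in c..τ, (τ - s)^(η-1) = (τ - c)^η / η := by
    intro c τ hcτ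
    rw [intervalIntegral.integral_comp_sub_left (fun x => x^(η-1)) τ, sub_self,
      integral_rpow (Or.inl hη1')]
    have h1 : η - 1 + 1 = η := by ring
    rw [h1, Real.zero_rpow hηne]
    ring
  -- tail bound
  have htail : ∀ τ : ℝ, 0 ≤ τ → τ ≤ T → ∀ c : ℝ, 0 ≤ c → c ≤ τ →
      (∫ s in c..τ, (τ - s)^(η-1) * v s) ≤ S τ * ((τ - c)^η / η) := by
    intro τ hτ0 hτT c hc0 hcτ
    have h1 : (∫ s in c..τ, (τ - s)^(η-1) * v s) ≤ ∫ s in c..τ, (τ - s)^(η-1) * S τ := by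
      apply intervalIntegral.integral_mono_on hcτ (hfii τ hτT c τ hc0 hcτ (le_refl _))
        ((hker τ c τ).mul_const _)
      intro s hs
      have hker0 : 0 ≤ (τ - s)^(η-1) := Real.rpow_nonneg (by linarith [hs.2]) _
      exact mul_le_mul_of_nonneg_left (hvleS s (le_trans hc0 hs.1) (le_trans hs.2 hτT) τ hs.2) hker0
    rw [intervalIntegral.integral_mul_const, hkerval c τ hcτ] at h1
    calc (∫ s in c..τ, (τ - s)^(η-1) * v s) ≤ (τ - c)^η / η * S τ := h1
      _ = S τ * ((τ - c)^η / η) := mul_comm _ _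
  -- small-time pointwise bound
  have hsmall : ∀ t : ℝ, t ∈ Set.Icc (0:ℝ) T → ∀ τ : ℝ, τ ∈ Set.Icc (0:ℝ) t → τ ≤ ε →
      v τ ≤ ω t + S t / 2 := by
    intro t ht τ hτ hτε
    have hτT : τ ∈ Set.Icc (0:ℝ) T := ⟨hτ.1, le_trans hτ.2 ht.2⟩
    have h1 := hineq τ hτT
    have h2 := htail τ hτ.1 hτT.2 0 (le_refl _) hτ.1
    rw [sub_zero] at h2
    have hτη : τ^η ≤ ε^η := Real.rpow_le_rpow hτ.1 hτε hη₁.le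
    have hSτt : S τ ≤ S t := hS_mono hτ.2
    have hSτ0 : 0 ≤ S τ := hS_nonneg τ hτ.1
    have hSt0 : 0 ≤ S t := hS_nonneg t ht.1
    have hτη0 : 0 ≤ τ^η := Real.rpow_nonneg hτ.1 _
    have e1 : a * (S t * (ε^η/η)) = S t / 2 := by
      rw [hεη]; field_simp
    have h3 : a * (S τ * (τ^η/η)) ≤ a * (S t * (ε^η/η)) := by
      apply mul_le_mul_of_nonneg_left _ ha.le
      apply mul_le_mul hSτt (by gcongr) (by positivity) hSt0
    have hωτ : ω τ ≤ ω t := hω_mono hτT ht hτ.2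
    have h4 : a * (∫ s in (0:ℝ)..τ, (τ - s)^(η-1) * v s) ≤ a * (S τ * (τ^η/η)) :=
      mul_le_mul_of_nonneg_left h2 ha.le
    rw [e1] at h3
    linarith
  -- key inequality
  have hkey : ∀ t ∈ Set.Icc (0:ℝ) T, S t ≤ 2 * ω t + C * ∫ s in (0:ℝ)..t, S s := by
    intro t ht
    have hIS : 0 ≤ ∫ s in (0:ℝ)..t, S s :=
      intervalIntegral.integral_nonneg ht.1 (fun s hs => hS_nonneg s hs.1)
    have hωt : 0 ≤ ω t := hω_nonneg t ht
    have hSt0 : 0 ≤ S t := hS_nonneg t ht.1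
    have hCI : 0 ≤ (C/2) * (∫ s in (0:ℝ)..t, S s) := mul_nonneg (by linarith) hIS
    have hbound : S t ≤ ω t + (C/2) * (∫ s in (0:ℝ)..t, S s) + S t / 2 := by
      refine Real.sSup_le ?_ (by linarith)
      rintro y ⟨τ, hτ', rfl⟩
      rw [min_eq_left ht.2] at hτ'
      rcases le_or_gt τ ε with hτε | hτε
      · have := hsmall t ht τ hτ' hτε
        nlinarith
      · -- split the integral
        set m := τ - ε with hm
        have hm0 : 0 < m := by simp only [hm]; linarith
        have hmτ : m ≤ τ := by simp only [hm]; linarith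
        have hτT : τ ∈ Set.Icc (0:ℝ) T := ⟨hτ'.1, le_trans hτ'.2 ht.2⟩
        have h1 := hineq τ hτT
        have hsplit : (∫ s in (0:ℝ)..τ, (τ - s)^(η-1) * v s) =
            (∫ s in (0:ℝ)..m, (τ - s)^(η-1) * v s) + ∫ s in m..τ, (τ - s)^(η-1) * v s :=
          (intervalIntegral.integral_add_adjacent_intervals
            (hfii τ hτT.2 0 m (le_refl _) hm0.le hmτ)
            (hfii τ hτT.2 m τ hm0.le hmτ (le_refl _))).symm
        have htail2 : (∫ s in m..τ, (τ - s)^(η-1) * v s) ≤ S τ * (ε^η/η) := by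
          have := htail τ hτ'.1 hτT.2 m hm0.le hmτ
          rwa [show τ - m = ε by simp [hm]] at this
        have hSτ0 : 0 ≤ S τ := hS_nonneg τ hτ'.1
        have hSτt : S τ ≤ S t := hS_mono hτ'.2
        have e1 : a * (S τ * (ε^η/η)) = S τ / 2 := by
          rw [hεη]; field_simp
        have hA2 : a * (∫ s in m..τ, (τ - s)^(η-1) * v s) ≤ S t / 2 := by
          have := mul_le_mul_of_nonneg_left htail2 ha.le
          rw [e1] at this
          linarith
        have hhead : (∫ s in (0:ℝ)..m, (τ - s)^(η-1) * v s) ≤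
            ε^(η-1) * ∫ s in (0:ℝ)..m, S s := by
          rw [← intervalIntegral.integral_const_mul]
          apply intervalIntegral.integral_mono_on hm0.le
            (hfii τ hτT.2 0 m (le_refl _) hm0.le hmτ)
            ((hSii 0 m (le_refl _) hm0.le (le_trans hmτ hτT.2)).const_mul _)
          intro s hs
          have hsT : s ∈ Set.Icc (0:ℝ) T := ⟨hs.1, le_trans hs.2 (le_trans hmτ hτT.2)⟩
          have hker1 : (τ - s)^(η-1) ≤ ε^(η-1) := by
            apply Real.rpow_le_rpow_of_nonpos hεpos _ (by linarith)
            simp only [hm] at hs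
            linarith [hs.2]
          have hvs : v s ≤ S s := hvleS s hs.1 hsT.2 s (le_refl _)
          exact mul_le_mul hker1 hvs (hv_nonneg s hsT) hεpow.le
        have hheadint : (∫ s in (0:ℝ)..m, S s) ≤ ∫ s in (0:ℝ)..t, S s := by
          have hmt : m ≤ t := le_trans hmτ hτ'.2
          have hadd : (∫ s in (0:ℝ)..t, S s) =
              (∫ s in (0:ℝ)..m, S s) + ∫ s in m..t, S s :=
            (intervalIntegral.integral_add_adjacent_intervals
              (hSii 0 m (le_refl _) hm0.le (le_trans hmt ht.2))
              (hSii m t hm0.le hmt ht.2)).symm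
          have h2 : 0 ≤ ∫ s in m..t, S s :=
            intervalIntegral.integral_nonneg hmt (fun s hs => hS_nonneg s (le_trans hm0.le hs.1))
          linarith
        have hA1 : a * (∫ s in (0:ℝ)..m, (τ - s)^(η-1) * v s) ≤
            (C/2) * ∫ s in (0:ℝ)..t, S s := by
          have hstep : a * (∫ s in (0:ℝ)..m, (τ - s)^(η-1) * v s) ≤
              a * (ε^(η-1) * ∫ s in (0:ℝ)..t, S s) := by
            apply mul_le_mul_of_nonneg_left _ ha.le
            calc (∫ s in (0:ℝ)..m, (τ - s)^(η-1) * v s) ≤ ε^(η-1) * ∫ s in (0:ℝ)..m, S s := hhead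
              _ ≤ ε^(η-1) * ∫ s in (0:ℝ)..t, S s := mul_le_mul_of_nonneg_left hheadint hεpow.le
          calc a * (∫ s in (0:ℝ)..m, (τ - s)^(η-1) * v s) ≤
              a * (ε^(η-1) * ∫ s in (0:ℝ)..t, S s) := hstep
            _ = (C/2) * ∫ s in (0:ℝ)..t, S s := by rw [hC]; ring
        have hωτ : ω τ ≤ ω t := hω_mono hτT ht hτ'.2
        have hfin : a * (∫ s in (0:ℝ)..τ, (τ - s)^(η-1) * v s) =
            a * (∫ s in (0:ℝ)..m, (τ - s)^(η-1) * v s) +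
            a * (∫ s in m..τ, (τ - s)^(η-1) * v s) := by rw [hsplit]; ring
        linarith
    linarith
  -- apply Gronwall
  have hSexp : ∀ t ∈ Set.Icc (0:ℝ) T, S t ≤ (2 * ω t) * Real.exp (C * t) := by
    apply gronwall_series T C M hCpos.le hM0 (fun s => 2 * ω s) S
    · intro x hx y hy hxy
      have := hω_mono hx hy hxy
      show 2 * ω x ≤ 2 * ω y
      linarith
    · intro s hs; linarith [hω_nonneg s hs]
    · exact hS_int
    · intro s hs; exact hS_nonneg s hs.1
    · intro s _; exact hS_le_M s
    · exact hkey
  -- constants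
  set K := (4:ℝ)^(2/η)*a^(2/η)/η^(2/η) with hK
  have hK0 : 0 < K := by positivity
  have hε2 : ε^(2:ℕ) = x₀^(2/η) := by
    rw [hε, ← Real.rpow_natCast (x₀^(1/η)) 2, ← Real.rpow_mul hx₀pos.le]
    congr 1
    push_cast
    ring
  have hKε2 : K * ε^(2:ℕ) = (2:ℝ)^(2/η) := by
    rw [hε2, hK]
    rw [show (4:ℝ)^(2/η)*a^(2/η)/η^(2/η) = ((4*a)/η)^(2/η) by
      rw [Real.div_rpow (by positivity) hη₁.le, Real.mul_rpow (by norm_num) ha.le]]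
    rw [← Real.mul_rpow (by positivity) hx₀pos.le]
    congr 1
    rw [hx₀]
    field_simp
    ring
  have hη2K : η ≤ K * ε^(2:ℕ) := by
    rw [hKε2]
    calc η ≤ 1 := hη₂.le
      _ ≤ (2:ℝ)^(2/η) := Real.one_le_rpow (by norm_num) (div_nonneg (by norm_num) hη₁.le)
  have hCKε : C ≤ K * ε := by
    have h1 : C * ε ≤ (K * ε) * ε := by
      rw [hCε]
      calc η ≤ K * ε^(2:ℕ) := hη2K
        _ = (K * ε) * ε := by ring
    exact le_of_mul_le_mul_right h1 hεpos
  -- finish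
  intro t ht
  have hvS : v t ≤ S t := hvleS t ht.1 ht.2 t (le_refl _)
  have hωt : 0 ≤ ω t := hω_nonneg t ht
  have hargeq : (4:ℝ)^(2/η) * a^(2/η) * t^2 / η^(2/η) = K * t^2 := by rw [hK]; ring
  rw [hargeq]
  have hSt0 : 0 ≤ S t := hS_nonneg t ht.1
  rcases le_or_gt t ε with htε | htε
  · have hSt2 : S t ≤ 2 * ω t := by
      have hb : S t ≤ ω t + S t / 2 := by
        refine Real.sSup_le ?_ (by linarith)
        rintro y ⟨τ, hτ', rfl⟩
        rw [min_eq_left ht.2] at hτ'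
        exact hsmall t ht τ hτ' (le_trans hτ'.2 htε)
      linarith
    have hexp1 : 1 ≤ Real.exp (K * t^2) :=
      Real.one_le_exp (mul_nonneg hK0.le (sq_nonneg t))
    have h3 : 2 * ω t * 1 ≤ 2 * ω t * Real.exp (K * t^2) :=
      mul_le_mul_of_nonneg_left hexp1 (by linarith)
    linarith
  · have h1 := hSexp t ht
    have h2 : Real.exp (C * t) ≤ Real.exp (K * t^2) := by
      apply Real.exp_le_exp.mpr
      have hKεt : K * ε ≤ K * t := mul_le_mul_of_nonneg_left htε.le hK0.le
      have hCt : C ≤ K * t := le_trans hCKε hKεt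
      have := mul_le_mul_of_nonneg_right hCt ht.1
      calc C * t ≤ K * t * t := this
        _ = K * t^2 := by ring
    calc v t ≤ S t := hvS
      _ ≤ (2 * ω t) * Real.exp (C * t) := h1
      _ ≤ (2 * ω t) * Real.exp (K * t^2) := by
          apply mul_le_mul_of_nonneg_left h2 (by linarith)
      _ = 2 * ω t * Real.exp (K * t^2) := by ring
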